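/- Let n, d be positive integers and r an integer with gcd(r,d) = 1, r < (d-1)n, and d | (n+r). If (q^r;q^d)_{((d-1)n-r)/d} / (q^d;q^d)_{((d-1)n-r)/d} is written in lowest terms as A(q)/B(q), then B(q) is coprime to 1 - q^n. -/

import Mathlib

open Finset Polynomial

/-- The indeterminate `q`, as a rational function over `ℚ`. -/
noncomputable def q : RatFunc ℚ := RatFunc.X

/-- The q-shifted factorial `(q^r; q^d)_m = ∏_{j=0}^{m-1} (1 - q^{r+dj})`. -/
noncomputable def qPoch (r d : ℤ) (m : ℕ) : RatFunc ℚ :=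
  ∏ j ∈ Finset.range m, (1 - q ^ (r + d * (j : ℤ)))

/-- The q-integer `[m] = (1-q^m)/(1-q)`. -/
noncomputable def qint (m : ℤ) : RatFunc ℚ := (1 - q ^ m) / (1 - q)

/-- Congruence of rational functions modulo a polynomial `P`: the difference can be
written with numerator divisible by `P` and denominator coprime to `P`. -/
def modCong (A B : RatFunc ℚ) (P : Polynomial ℚ) : Prop :=
  ∃ c e : Polynomial ℚ, IsCoprime e P ∧
    A - B = algebraMap (Polynomial ℚ) (RatFunc ℚ) (P * c) /
            algebraMap (Polynomial ℚ) (RatFunc ℚ) e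

/-- The q-integer `[n]` as a polynomial: `1 + q + ⋯ + q^{n-1}`. -/
noncomputable def qintPoly (n : ℕ) : Polynomial ℚ := ∑ i ∈ Finset.range n, Polynomial.X ^ i


lemma aux_one_sub_X_pow_ne_zero {K : Type*} [Field K] {e : ℕ} (he : 0 < e) :
    (1 - Polynomial.X ^ e : Polynomial K) ≠ 0 := by
  intro h
  have := congrArg (Polynomial.eval 0) h
  simp [Polynomial.eval_pow, zero_pow he.ne'] at this

lemma aux_q_pow_nat (e : ℕ) :
    q ^ (e : ℤ) = algebraMap (Polynomial ℚ) (RatFunc ℚ) (Polynomial.X ^ e) := by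
  rw [zpow_natCast, map_pow, RatFunc.algebraMap_X]; rfl

lemma aux_prod_eq (f : ℕ → ℤ) (m : ℕ) (hf : ∀ j < m, f j ≠ 0) :
    ∃ (ε : ℚ) (s : ℕ), (ε = 1 ∨ ε = -1) ∧
      (∏ j ∈ Finset.range m, (1 - q ^ f j)) * algebraMap (Polynomial ℚ) (RatFunc ℚ) (Polynomial.X ^ s)
        = algebraMap (Polynomial ℚ) (RatFunc ℚ)
            (Polynomial.C ε * ∏ j ∈ Finset.range m, (1 - Polynomial.X ^ (f j).natAbs)) := by
  induction m with
  | zero => exact ⟨1, 0, Or.inl rfl, by simp⟩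
  | succ m ih =>
    obtain ⟨ε, s, hε, heq⟩ := ih (fun j hj => hf j (hj.trans (Nat.lt_succ_self m)))
    have hfm := hf m (Nat.lt_succ_self m)
    rcases lt_or_gt_of_ne hfm with hneg | hpos
    · -- f m < 0
      refine ⟨-ε, s + (f m).natAbs, by rcases hε with h | h <;> simp [h], ?_⟩
      have hq0 : (q : RatFunc ℚ) ≠ 0 := RatFunc.X_ne_zero
      have hcancel : q ^ f m * q ^ ((f m).natAbs : ℤ) = 1 := by
        rw [← zpow_add₀ hq0]
        have : f m + ((f m).natAbs : ℤ) = 0 := by omega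
        rw [this, zpow_zero]
      have hfac : (1 - q ^ f m) * algebraMap (Polynomial ℚ) (RatFunc ℚ) (Polynomial.X ^ (f m).natAbs)
          = algebraMap (Polynomial ℚ) (RatFunc ℚ) (-(1 - Polynomial.X ^ (f m).natAbs)) := by
        rw [← aux_q_pow_nat, sub_mul, one_mul, hcancel, map_neg, map_sub, map_one, ← aux_q_pow_nat]
        ring
      rw [Finset.prod_range_succ, Finset.prod_range_succ, pow_add, map_mul]
      calc (∏ j ∈ Finset.range m, (1 - q ^ f j)) * (1 - q ^ f m) *
            (algebraMap (Polynomial ℚ) (RatFunc ℚ) (Polynomial.X ^ s) *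
             algebraMap (Polynomial ℚ) (RatFunc ℚ) (Polynomial.X ^ (f m).natAbs))
          = ((∏ j ∈ Finset.range m, (1 - q ^ f j)) * algebraMap (Polynomial ℚ) (RatFunc ℚ) (Polynomial.X ^ s)) *
            ((1 - q ^ f m) * algebraMap (Polynomial ℚ) (RatFunc ℚ) (Polynomial.X ^ (f m).natAbs)) := by ring
        _ = algebraMap (Polynomial ℚ) (RatFunc ℚ)
              ((Polynomial.C ε * ∏ j ∈ Finset.range m, (1 - Polynomial.X ^ (f j).natAbs)) *
               (-(1 - Polynomial.X ^ (f m).natAbs))) := by rw [map_mul, ← heq, ← hfac]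
        _ = algebraMap (Polynomial ℚ) (RatFunc ℚ)
              (Polynomial.C (-ε) * ((∏ j ∈ Finset.range m, (1 - Polynomial.X ^ (f j).natAbs)) *
               (1 - Polynomial.X ^ (f m).natAbs))) := by congr 1; simp only [map_neg]; ring
    · -- f m > 0
      refine ⟨ε, s, hε, ?_⟩
      have hfac : (1 - q ^ f m) = algebraMap (Polynomial ℚ) (RatFunc ℚ) (1 - Polynomial.X ^ (f m).natAbs) := by
        rw [map_sub, map_one, ← aux_q_pow_nat]
        congr 1
        congr 1
        exact (Int.natAbs_of_nonneg hpos.le).symm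
      rw [Finset.prod_range_succ, Finset.prod_range_succ]
      calc (∏ j ∈ Finset.range m, (1 - q ^ f j)) * (1 - q ^ f m) *
            algebraMap (Polynomial ℚ) (RatFunc ℚ) (Polynomial.X ^ s)
          = ((∏ j ∈ Finset.range m, (1 - q ^ f j)) * algebraMap (Polynomial ℚ) (RatFunc ℚ) (Polynomial.X ^ s)) * (1 - q ^ f m) := by ring
        _ = algebraMap (Polynomial ℚ) (RatFunc ℚ)
              ((Polynomial.C ε * ∏ j ∈ Finset.range m, (1 - Polynomial.X ^ (f j).natAbs)) *
               (1 - Polynomial.X ^ (f m).natAbs)) := by rw [heq, hfac]; exact (map_mul _ _ _).symm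
        _ = _ := by rw [mul_assoc]

lemma aux_rm_prod {S : Finset ℕ} {f : ℕ → Polynomial ℂ} (hf : ∀ j ∈ S, f j ≠ 0) (z : ℂ) :
    Polynomial.rootMultiplicity z (∏ j ∈ S, f j) = ∑ j ∈ S, Polynomial.rootMultiplicity z (f j) := by
  classical
  induction S using Finset.induction with
  | empty =>
    simp only [Finset.prod_empty, Finset.sum_empty]
    exact Polynomial.rootMultiplicity_eq_zero (by simp [Polynomial.IsRoot])
  | @insert a S' hj ih =>
    rw [Finset.prod_insert hj, Finset.sum_insert hj,
      Polynomial.rootMultiplicity_mul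
        (mul_ne_zero (hf a (Finset.mem_insert_self a S'))
          (Finset.prod_ne_zero_iff.2 fun i hi => hf i (Finset.mem_insert_of_mem hi))),
      ih fun i hi => hf i (Finset.mem_insert_of_mem hi)]

lemma aux_rm_one_sub_X_pow (z : ℂ) (hz : z ≠ 0) {e : ℕ} (he : 0 < e) :
    Polynomial.rootMultiplicity z (1 - Polynomial.X ^ e : Polynomial ℂ) =
      if z ^ e = 1 then 1 else 0 := by
  have hne : (1 - Polynomial.X ^ e : Polynomial ℂ) ≠ 0 := aux_one_sub_X_pow_ne_zero he
  split_ifs with h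
  · refine le_antisymm ?_ ?_
    · have hsep : ((Polynomial.X : Polynomial ℂ) ^ e - 1).Separable := by
        rw [Polynomial.X_pow_sub_one_separable_iff]
        exact_mod_cast Nat.cast_ne_zero.2 he.ne'
      have h1 : (1 - Polynomial.X ^ e : Polynomial ℂ) = Polynomial.C (-1) * ((Polynomial.X) ^ e - 1) := by rw [map_neg, map_one]; ring
      rw [h1, Polynomial.rootMultiplicity_mul (by rw [← h1]; exact hne),
        Polynomial.rootMultiplicity_eq_zero (by simp [Polynomial.IsRoot]), zero_add]
      exact Polynomial.rootMultiplicity_le_one_of_separable hsep z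
    · rw [Nat.one_le_iff_ne_zero, ← pos_iff_ne_zero, Polynomial.rootMultiplicity_pos hne]
      simp [Polynomial.IsRoot, h]
  · exact Polynomial.rootMultiplicity_eq_zero (by simp [Polynomial.IsRoot, sub_eq_zero]; exact fun hh => h hh.symm)

lemma aux_count_eq (m k : ℕ) :
    (Finset.filter (fun j => k ∣ (j + 1)) (Finset.range m)).card = m / k := by
  rw [← Nat.Ioc_filter_dvd_card_eq_div m k]
  apply Finset.card_bij (fun j _ => j + 1)
  · intro a ha
    simp only [Finset.mem_filter, Finset.mem_range] at ha
    simp only [Finset.mem_filter, Finset.mem_Ioc]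
    exact ⟨⟨Nat.succ_pos a, ha.1⟩, ha.2⟩
  · intro a ha b hb hab; omega
  · intro b hb
    simp only [Finset.mem_filter, Finset.mem_Ioc] at hb
    have hb1 : b - 1 + 1 = b := by omega
    exact ⟨b - 1, by simp only [Finset.mem_filter, Finset.mem_range, hb1]; exact ⟨by omega, hb.2⟩, by omega⟩

lemma aux_count_ge (m k : ℕ) (hk : 0 < k) (r : ℤ) (d : ℕ) (hdk : Nat.Coprime d k) :
    m / k ≤ (Finset.filter (fun j : ℕ => (k : ℤ) ∣ r + d * (j : ℤ)) (Finset.range m)).card := by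
  haveI : NeZero k := ⟨hk.ne'⟩
  set x : ZMod k := -(r : ZMod k) * ((d : ZMod k))⁻¹ with hx
  have hj0 : x.val < k := ZMod.val_lt x
  have hsol : ((r : ZMod k) + (d : ℕ) * (x.val : ZMod k)) = 0 := by
    rw [ZMod.natCast_val, ZMod.cast_id, hx]
    have : ((d : ZMod k)) * (-(r : ZMod k) * ((d : ZMod k))⁻¹)
        = -(r : ZMod k) * (((d : ZMod k)) * ((d : ZMod k))⁻¹) := by ring
    rw [this, ZMod.coe_mul_inv_eq_one d hdk, mul_one]
    ring
  have hdvd0 : (k : ℤ) ∣ r + d * x.val := by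
    apply (ZMod.intCast_zmod_eq_zero_iff_dvd (r + d * x.val) k).1
    push_cast
    exact_mod_cast hsol
  calc m / k = (Finset.range (m / k)).card := (Finset.card_range _).symm
    _ ≤ _ := by
      apply Finset.card_le_card_of_injOn (fun i => x.val + k * i)
      · intro i hi
        simp only [Finset.mem_coe, Finset.mem_range] at hi
        simp only [Finset.mem_coe, Finset.mem_filter, Finset.mem_range]
        constructor
        · have h1 : k * (i + 1) ≤ k * (m / k) := Nat.mul_le_mul_left k hi
          have h2 : k * (m / k) ≤ m := Nat.mul_div_le m k
          have h0 : k * (i + 1) = k * i + k := by ring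
          omega
        · have : (k : ℤ) ∣ (d : ℤ) * (k * i) := ⟨d * i, by ring⟩
          have h3 : r + d * ((x.val : ℤ) + k * i) = (r + d * x.val) + d * (k * i) := by ring
          push_cast
          rw [h3]
          exact dvd_add hdvd0 this
      · intro a _ b _ hab
        simp only at hab
        exact Nat.eq_of_mul_eq_mul_left hk (by omega)


/-- the denominator of
`(q^r;q^d)_{((d-1)n-r)/d} / (q^d;q^d)_{((d-1)n-r)/d}` in lowest terms is
coprime to `1 - q^n`. -/
theorem stmt7 (n d : ℕ) (hn : 0 < n) (hd : 0 < d) (r : ℤ)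
    (hrd : IsCoprime r (d : ℤ)) (hr : r < ((d : ℤ) - 1) * n) (hdiv : (d : ℤ) ∣ (n : ℤ) + r) :
    IsCoprime
      (RatFunc.denom (qPoch r d ((((d : ℤ) - 1) * n - r) / d).toNat /
        qPoch d d ((((d : ℤ) - 1) * n - r) / d).toNat))
      (1 - Polynomial.X ^ n) := by
  set m : ℕ := ((((d : ℤ) - 1) * n - r) / d).toNat with hm
  set F : RatFunc ℚ := qPoch r d m / qPoch d d m with hFdef
  have φinj : Function.Injective (algebraMap (Polynomial ℚ) (RatFunc ℚ)) :=
    IsFractionRing.injective (Polynomial ℚ) (RatFunc ℚ)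
  -- exponents of numerator are nonzero
  have hfne : ∀ j < m, r + (d : ℤ) * (j : ℕ) ≠ 0 := by
    intro j hj h0
    have hdvd : (d : ℤ) ∣ r := ⟨-(j : ℤ), by linarith⟩
    have hu : IsUnit (d : ℤ) := hrd.isUnit_of_dvd' hdvd dvd_rfl
    have hd1 : (d : ℤ) = 1 := by
      rcases Int.isUnit_iff.1 hu with h | h
      · exact h
      · omega
    rw [hd1, one_mul] at h0
    have hm' : m = j := by
      have hv : (((d : ℤ) - 1) * n - r) / d = (j : ℤ) := by
        rw [hd1]
        simp only [sub_self, zero_mul, zero_sub, Int.ediv_one]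
        omega
      rw [hm, hv, Int.toNat_natCast]
    omega
  -- denominator polynomial
  set D : Polynomial ℚ := ∏ j ∈ Finset.range m, (1 - Polynomial.X ^ (d * (j + 1))) with hD
  have hDfac : ∀ j : ℕ, 0 < d * (j + 1) := fun j => Nat.mul_pos hd (Nat.succ_pos j)
  have hDne : D ≠ 0 :=
    Finset.prod_ne_zero_iff.2 fun j _ => aux_one_sub_X_pow_ne_zero (hDfac j)
  have hqD : qPoch d d m = algebraMap (Polynomial ℚ) (RatFunc ℚ) D := by
    rw [qPoch, hD, map_prod]
    apply Finset.prod_congr rfl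
    intro j _
    have hcast : (d : ℤ) + (d : ℤ) * (j : ℤ) = ((d * (j + 1) : ℕ) : ℤ) := by push_cast; ring
    rw [hcast, aux_q_pow_nat, map_sub, map_one]
  -- numerator polynomial
  obtain ⟨ε, s, hε, hNum⟩ := aux_prod_eq (fun j => r + (d : ℤ) * (j : ℤ)) m hfne
  set N : Polynomial ℚ := ∏ j ∈ Finset.range m, (1 - Polynomial.X ^ (r + (d : ℤ) * (j : ℤ)).natAbs) with hN
  have hqN : qPoch r d m * algebraMap (Polynomial ℚ) (RatFunc ℚ) (Polynomial.X ^ s)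
      = algebraMap (Polynomial ℚ) (RatFunc ℚ) (Polynomial.C ε * N) := hNum
  have hNne : N ≠ 0 := by
    refine Finset.prod_ne_zero_iff.2 fun j hj => aux_one_sub_X_pow_ne_zero ?_
    have := hfne j (Finset.mem_range.1 hj)
    omega
  have hdenne := RatFunc.denom_ne_zero F
  -- the key polynomial identity
  have key : F.num * Polynomial.X ^ s * D = (Polynomial.C ε * N) * F.denom := by
    apply φinj
    rw [map_mul, map_mul, map_mul]
    have h1 : algebraMap (Polynomial ℚ) (RatFunc ℚ) F.num
        = F * algebraMap (Polynomial ℚ) (RatFunc ℚ) F.denom :=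
      (div_eq_iff (RatFunc.algebraMap_ne_zero hdenne)).1 (RatFunc.num_div_denom F)
    have hqDne : qPoch d d m ≠ 0 := by
      intro h
      rw [hqD] at h
      exact RatFunc.algebraMap_ne_zero hDne h
    have h2 : F * algebraMap (Polynomial ℚ) (RatFunc ℚ) D = qPoch r d m := by
      rw [hFdef, ← hqD]
      exact div_mul_cancel₀ _ hqDne
    calc algebraMap (Polynomial ℚ) (RatFunc ℚ) F.num *
          algebraMap (Polynomial ℚ) (RatFunc ℚ) (Polynomial.X ^ s) *
          algebraMap (Polynomial ℚ) (RatFunc ℚ) D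
        = (F * algebraMap (Polynomial ℚ) (RatFunc ℚ) D) *
          algebraMap (Polynomial ℚ) (RatFunc ℚ) (Polynomial.X ^ s) *
          algebraMap (Polynomial ℚ) (RatFunc ℚ) F.denom := by rw [h1]; ring
      _ = (qPoch r d m * algebraMap (Polynomial ℚ) (RatFunc ℚ) (Polynomial.X ^ s)) *
          algebraMap (Polynomial ℚ) (RatFunc ℚ) F.denom := by rw [h2]
      _ = algebraMap (Polynomial ℚ) (RatFunc ℚ) (Polynomial.C ε * N) *
          algebraMap (Polynomial ℚ) (RatFunc ℚ) F.denom := by rw [hqN]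
  -- suppose not coprime
  by_contra hcop
  classical
  set P : Polynomial ℚ := 1 - Polynomial.X ^ n with hP
  have hPne : P ≠ 0 := aux_one_sub_X_pow_ne_zero hn
  set g := EuclideanDomain.gcd F.denom P with hg
  have hgden : g ∣ F.denom := EuclideanDomain.gcd_dvd_left _ _
  have hgP : g ∣ P := EuclideanDomain.gcd_dvd_right _ _
  have hgu : ¬ IsUnit g := fun h => hcop (EuclideanDomain.gcd_isUnit_iff.1 h)
  have hgne : g ≠ 0 := fun h => hPne ((EuclideanDomain.gcd_eq_zero_iff).1 h).2
  have hdeg : 0 < g.degree :=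
    lt_of_le_of_ne (Polynomial.zero_le_degree_iff.2 hgne)
      (fun h => hgu (Polynomial.isUnit_iff_degree_eq_zero.2 h.symm))
  obtain ⟨z, hzroot⟩ := Complex.exists_root
    (f := g.map (algebraMap ℚ ℂ)) (by rwa [Polynomial.degree_map])
  have hzden : (F.denom.map (algebraMap ℚ ℂ)).eval z = 0 :=
    Polynomial.eval_eq_zero_of_dvd_of_eval_eq_zero
      (Polynomial.map_dvd (algebraMap ℚ ℂ) hgden) hzroot
  have hzn : z ^ n = 1 := by
    have h1 : ((P.map (algebraMap ℚ ℂ)).eval z) = 0 :=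
      Polynomial.eval_eq_zero_of_dvd_of_eval_eq_zero
        (Polynomial.map_dvd (algebraMap ℚ ℂ) hgP) hzroot
    rw [hP] at h1
    simp only [Polynomial.map_sub, Polynomial.map_one, Polynomial.map_pow, Polynomial.map_X,
      Polynomial.eval_sub, Polynomial.eval_one, Polynomial.eval_pow, Polynomial.eval_X,
      sub_eq_zero] at h1
    exact h1.symm
  have hz0 : z ≠ 0 := by
    intro h
    rw [h, zero_pow hn.ne'] at hzn
    exact zero_ne_one hzn
  have hfin : IsOfFinOrder z := isOfFinOrder_iff_pow_eq_one.2 ⟨n, hn, hzn⟩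
  set k := orderOf z with hk
  have hkpos : 0 < k := hfin.orderOf_pos
  have hkn : k ∣ n := orderOf_dvd_of_pow_eq_one hzn
  -- d and k are coprime
  have hdk : Nat.Coprime d k := by
    have h1 : ((Nat.gcd d k : ℕ) : ℤ) ∣ (n : ℤ) + r :=
      dvd_trans (Int.natCast_dvd_natCast.2 (Nat.gcd_dvd_left d k)) hdiv
    have h2 : ((Nat.gcd d k : ℕ) : ℤ) ∣ (n : ℤ) :=
      Int.natCast_dvd_natCast.2 ((Nat.gcd_dvd_right d k).trans hkn)
    have h3 : ((Nat.gcd d k : ℕ) : ℤ) ∣ r := by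
      have := dvd_sub h1 h2
      simpa using this
    have h4 : IsUnit ((Nat.gcd d k : ℕ) : ℤ) :=
      hrd.isUnit_of_dvd' h3 (Int.natCast_dvd_natCast.2 (Nat.gcd_dvd_left d k))
    have h5 : Nat.gcd d k = 1 := by
      rcases Int.isUnit_iff.1 h4 with h | h
      · exact_mod_cast h
      · omega
    exact h5
  -- nonzero images in ℂ[X]
  have hΦnumz : ((F.num.map (algebraMap ℚ ℂ)).eval z) ≠ 0 := by
    obtain ⟨a, b, hab⟩ := RatFunc.isCoprime_num_denom F
    intro h0
    have h1 := congrArg (fun p : Polynomial ℚ => (p.map (algebraMap ℚ ℂ)).eval z) hab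
    simp only [Polynomial.map_add, Polynomial.map_mul, Polynomial.map_one,
      Polynomial.eval_add, Polynomial.eval_mul, Polynomial.eval_one, h0, hzden,
      mul_zero, add_zero, zero_add] at h1
    exact zero_ne_one h1
  have hΦnum : F.num.map (algebraMap ℚ ℂ) ≠ 0 := by
    intro h; apply hΦnumz; rw [h]; simp
  have hΦden : F.denom.map (algebraMap ℚ ℂ) ≠ 0 := Polynomial.map_ne_zero hdenne
  have hΦD : D.map (algebraMap ℚ ℂ) ≠ 0 := Polynomial.map_ne_zero hDne
  have hΦN : N.map (algebraMap ℚ ℂ) ≠ 0 := Polynomial.map_ne_zero hNne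
  have hΦX : (Polynomial.X ^ s : Polynomial ℚ).map (algebraMap ℚ ℂ) ≠ 0 :=
    Polynomial.map_ne_zero (pow_ne_zero s Polynomial.X_ne_zero)
  have hεC : (algebraMap ℚ ℂ) ε ≠ 0 := by
    rcases hε with h | h <;> simp [h]
  have hΦC : (Polynomial.C ε : Polynomial ℚ).map (algebraMap ℚ ℂ) ≠ 0 := by
    rw [Polynomial.map_C]
    simpa using hεC
  -- root multiplicities
  have hrmD : Polynomial.rootMultiplicity z (D.map (algebraMap ℚ ℂ)) = m / k := by
    rw [hD, Polynomial.map_prod]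
    simp only [Polynomial.map_sub, Polynomial.map_one, Polynomial.map_pow, Polynomial.map_X]
    rw [aux_rm_prod (fun j _ => aux_one_sub_X_pow_ne_zero (hDfac j)) z]
    rw [Finset.sum_congr rfl (fun j _ => aux_rm_one_sub_X_pow z hz0 (hDfac j))]
    rw [← Finset.card_filter]
    rw [show (Finset.filter (fun j => z ^ (d * (j + 1)) = 1) (Finset.range m))
        = Finset.filter (fun j => k ∣ (j + 1)) (Finset.range m) from ?_]
    · exact aux_count_eq m k
    · apply Finset.filter_congr
      intro j _
      rw [← orderOf_dvd_iff_pow_eq_one, ← hk]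
      constructor
      · intro h
        exact (Nat.Coprime.dvd_of_dvd_mul_left (hdk.symm) h)
      · intro h
        exact Dvd.dvd.mul_left h d
  have hrmN : m / k ≤ Polynomial.rootMultiplicity z (N.map (algebraMap ℚ ℂ)) := by
    rw [hN, Polynomial.map_prod]
    simp only [Polynomial.map_sub, Polynomial.map_one, Polynomial.map_pow, Polynomial.map_X]
    have hNfac : ∀ j ∈ Finset.range m, 0 < (r + (d : ℤ) * (j : ℤ)).natAbs := by
      intro j hj
      have := hfne j (Finset.mem_range.1 hj)
      omega
    rw [aux_rm_prod (fun j hj => aux_one_sub_X_pow_ne_zero (hNfac j hj)) z]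
    calc m / k ≤ (Finset.filter (fun j : ℕ => (k : ℤ) ∣ r + d * (j : ℤ)) (Finset.range m)).card :=
          aux_count_ge m k hkpos r d hdk
      _ = ∑ j ∈ Finset.range m,
            (if z ^ (r + (d : ℤ) * (j : ℤ)).natAbs = 1 then 1 else 0) := by
          rw [Finset.card_filter]
          apply Finset.sum_congr rfl
          intro j _
          congr 1
          simp only [eq_iff_iff]
          rw [← orderOf_dvd_iff_pow_eq_one, ← hk]
          have hiff : (k ∣ (r + (d : ℤ) * (j : ℤ)).natAbs) ↔ ((k : ℤ) ∣ r + (d : ℤ) * (j : ℤ)) := by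
            constructor
            · intro h
              exact Int.natAbs_dvd_natAbs.1 (by rwa [Int.natAbs_natCast])
            · intro h
              have h2 := Int.natAbs_dvd_natAbs.2 h
              rwa [Int.natAbs_natCast] at h2
          rw [hiff]
      _ ≤ _ := by
          apply Finset.sum_le_sum
          intro j hj
          rw [aux_rm_one_sub_X_pow z hz0 (hNfac j hj)]
  -- conclude
  have hkey2 := congrArg (Polynomial.map (algebraMap ℚ ℂ)) key
  simp only [Polynomial.map_mul] at hkey2
  have hrml := congrArg (Polynomial.rootMultiplicity z) hkey2
  rw [Polynomial.rootMultiplicity_mul (mul_ne_zero (mul_ne_zero hΦnum hΦX) hΦD),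
      Polynomial.rootMultiplicity_mul (mul_ne_zero hΦnum hΦX),
      Polynomial.rootMultiplicity_mul (mul_ne_zero (mul_ne_zero hΦC hΦN) hΦden),
      Polynomial.rootMultiplicity_mul (mul_ne_zero hΦC hΦN)] at hrml
  have hrmnum : Polynomial.rootMultiplicity z (F.num.map (algebraMap ℚ ℂ)) = 0 :=
    Polynomial.rootMultiplicity_eq_zero hΦnumz
  have hrmX : Polynomial.rootMultiplicity z ((Polynomial.X ^ s : Polynomial ℚ).map (algebraMap ℚ ℂ)) = 0 := by
    rw [Polynomial.map_pow, Polynomial.map_X]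
    refine Polynomial.rootMultiplicity_eq_zero ?_
    simp only [Polynomial.IsRoot, Polynomial.eval_pow, Polynomial.eval_X]
    exact pow_ne_zero s hz0
  have hrmC : Polynomial.rootMultiplicity z ((Polynomial.C ε : Polynomial ℚ).map (algebraMap ℚ ℂ)) = 0 := by
    rw [Polynomial.map_C]
    refine Polynomial.rootMultiplicity_eq_zero ?_
    simpa [Polynomial.IsRoot] using hεC
  have hrmden : 0 < Polynomial.rootMultiplicity z (F.denom.map (algebraMap ℚ ℂ)) :=
    (Polynomial.rootMultiplicity_pos hΦden).2 hzden
  rw [hrmnum, hrmX, hrmC, hrmD] at hrml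
  omega
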